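/- Let F : ℕ → ℕ be the Fibonacci sequence with F 0 = 1, F 1 = 1 and F (n+2) = F (n+1) + F n, for n ≥ 1 let φ_n = (F n : ℝ) / (F (n−1) : ℝ), and let φ = (1 + √5)/2. Then for every m ≥ 1, |φ_m − φ| ≤ 1 / (F (m−1) : ℝ). -/

import Mathlib

private lemma psi_pow_key : ∀ m : ℕ,
    (Nat.fib (m + 1) : ℝ) - (1 + Real.sqrt 5) / 2 * (Nat.fib m : ℝ) =
      ((1 - Real.sqrt 5) / 2) ^ m := by
  have h5 : Real.sqrt 5 ^ 2 = 5 := Real.sq_sqrt (by norm_num)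
  intro m
  induction m using Nat.twoStepInduction with
  | zero => simp
  | one => simp [Nat.fib]; ring
  | more n ih1 ih2 =>
    have hfib : (Nat.fib (n + 2 + 1) : ℝ) = Nat.fib (n + 1 + 1) + Nat.fib (n + 1) := by
      rw [Nat.fib_add_two]; push_cast; ring
    have hfib2 : (Nat.fib (n + 2) : ℝ) = Nat.fib (n + 1) + Nat.fib n := by
      rw [Nat.fib_add_two]; push_cast; ring
    have hpsi : ((1 - Real.sqrt 5) / 2) ^ (n + 2) =
        ((1 - Real.sqrt 5) / 2) ^ (n + 1) + ((1 - Real.sqrt 5) / 2) ^ n := by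
      have : ((1 - Real.sqrt 5) / 2) ^ 2 = (1 - Real.sqrt 5) / 2 + 1 := by
        field_simp; nlinarith [h5]
      calc ((1 - Real.sqrt 5) / 2) ^ (n + 2)
          = ((1 - Real.sqrt 5) / 2) ^ n * ((1 - Real.sqrt 5) / 2) ^ 2 := by ring
        _ = ((1 - Real.sqrt 5) / 2) ^ n * ((1 - Real.sqrt 5) / 2 + 1) := by rw [this]
        _ = ((1 - Real.sqrt 5) / 2) ^ (n + 1) + ((1 - Real.sqrt 5) / 2) ^ n := by ring
    rw [hfib, hfib2, hpsi]
    nlinarith [ih1, ih2]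

/-- Explicit convergence-rate bound: for every `m ≥ 1`,
`|φ m - (1 + √5)/2| ≤ 1 / F (m - 1)`. -/
theorem fib_ratio_dist_goldenRatio_le (F : ℕ → ℕ) (hF0 : F 0 = 1) (hF1 : F 1 = 1)
    (hFrec : ∀ n : ℕ, F (n + 2) = F (n + 1) + F n)
    (φ : ℕ → ℝ) (hφ : ∀ n : ℕ, 1 ≤ n → φ n = (F n : ℝ) / (F (n - 1) : ℝ)) :
    ∀ m : ℕ, 1 ≤ m → |φ m - (1 + Real.sqrt 5) / 2| ≤ 1 / (F (m - 1) : ℝ) := by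
  have hFfib : ∀ n, F n = Nat.fib (n + 1) := by
    intro n
    induction n using Nat.twoStepInduction with
    | zero => simpa using hF0
    | one => simpa using hF1
    | more n ih1 ih2 =>
      have h := Nat.fib_add_two (n := n + 1)
      rw [hFrec, ih1, ih2]
      simp only [show n + 1 + 1 = n + 2 from rfl, show n + 2 + 1 = n + 1 + 2 from rfl] at *
      omega
  intro m hm
  obtain ⟨k, rfl⟩ := Nat.exists_eq_add_of_le hm
  simp only [Nat.add_sub_cancel_left] at *
  rw [hφ _ (by omega)]
  simp only [Nat.add_sub_cancel_left, hFfib]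
  have hfibpos : 0 < (Nat.fib (k + 1) : ℝ) := by
    exact_mod_cast Nat.fib_pos.mpr (by omega)
  rw [show 1 + k = k + 1 by ring] at *
  have key := psi_pow_key (k + 1)
  have : (Nat.fib (k + 1 + 1) : ℝ) / (Nat.fib (k + 1) : ℝ) - (1 + Real.sqrt 5) / 2 =
      ((1 - Real.sqrt 5) / 2) ^ (k + 1) / (Nat.fib (k + 1) : ℝ) := by
    rw [← key]
    field_simp
  rw [this, abs_div, abs_of_pos hfibpos, div_le_div_iff₀ hfibpos hfibpos, one_mul]
  have habs : |(1 - Real.sqrt 5) / 2| ≤ 1 := by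
    rw [abs_le]
    constructor
    · nlinarith [Real.sq_sqrt (show (5:ℝ) ≥ 0 by norm_num), Real.sqrt_nonneg 5]
    · nlinarith [Real.sqrt_nonneg 5]
  calc |((1 - Real.sqrt 5) / 2) ^ (k + 1)| * (Nat.fib (k + 1) : ℝ)
      = |(1 - Real.sqrt 5) / 2| ^ (k + 1) * (Nat.fib (k + 1) : ℝ) := by rw [abs_pow]
    _ ≤ 1 ^ (k + 1) * (Nat.fib (k + 1) : ℝ) := by
        gcongr
    _ = (Nat.fib (k + 1) : ℝ) := by ring
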